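/- Let n ≥ 1 be a natural number and s a complex number with Re(s) > 1. Then ∑_{m=1}^∞ C_n^m / m^s = ζ(s) · ∑_{d | n} μ(n/d) · d^{1−s}, where C_n^m is the Ramanujan sum, μ is the Möbius function, the series converges, and ζ is the Riemann zeta function. -/

import Mathlib

/-- The Ramanujan sum `C n m`: the sum of the `m`-th powers of the primitive
`n`-th roots of unity in `ℂ`. -/
noncomputable def ramanujanSum (n m : ℕ) : ℂ :=
  ∑ ξ ∈ primitiveRoots n ℂ, ξ ^ m

open Finset Complex Polynomial ArithmeticFunction

lemma sum_nthRoots_pow (n : ℕ) (hn : 0 < n) (m : ℕ) :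
    ∑ x ∈ nthRootsFinset n (1 : ℂ), x ^ m = if n ∣ m then (n : ℂ) else 0 := by
  have : NeZero n := ⟨hn.ne'⟩
  obtain ⟨z, hz⟩ : ∃ z : ℂ, IsPrimitiveRoot z n :=
    ⟨_, Complex.isPrimitiveRoot_exp n hn.ne'⟩
  have himg : nthRootsFinset n (1 : ℂ) = (Finset.range n).image (z ^ ·) := by
    ext x
    simp only [Polynomial.mem_nthRootsFinset hn, Finset.mem_image, Finset.mem_range]
    constructor
    · intro hx
      obtain ⟨i, hi, hix⟩ := hz.eq_pow_of_pow_eq_one hx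
      exact ⟨i, hi, hix⟩
    · rintro ⟨i, hi, rfl⟩
      rw [← pow_mul, mul_comm, pow_mul, hz.pow_eq_one, one_pow]
  rw [himg, Finset.sum_image (fun i hi j hj h =>
    hz.pow_inj (mem_range.1 hi) (mem_range.1 hj) h)]
  have hrw : ∀ i, (z ^ i) ^ m = (z ^ m) ^ i := fun i => by
    rw [← pow_mul, mul_comm, pow_mul]
  simp_rw [hrw]
  by_cases h : n ∣ m
  · rw [if_pos h, (hz.pow_eq_one_iff_dvd m).2 h]
    simp
  · rw [if_neg h, geom_sum_eq (fun h1 => h ((hz.pow_eq_one_iff_dvd m).1 h1))]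
    have : (z ^ m) ^ n = 1 := by
      rw [← pow_mul, mul_comm, pow_mul, hz.pow_eq_one, one_pow]
    rw [this, sub_self, zero_div]

lemma sum_divisors_ramanujanSum (m n : ℕ) (hn : 0 < n) :
    ∑ d ∈ n.divisors, ramanujanSum d m = if n ∣ m then (n : ℂ) else 0 := by
  have : NeZero n := ⟨hn.ne'⟩
  obtain ⟨z, hz⟩ : ∃ z : ℂ, IsPrimitiveRoot z n :=
    ⟨_, Complex.isPrimitiveRoot_exp n hn.ne'⟩
  rw [← sum_nthRoots_pow n hn m, IsPrimitiveRoot.nthRoots_one_eq_biUnion_primitiveRoots,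
    Finset.sum_biUnion]
  · rfl
  · intro a ha b hb hab
    exact Finset.disjoint_coe.1 (by exact_mod_cast IsPrimitiveRoot.disjoint hab)

lemma ramanujanSum_eq_sum (n : ℕ) (hn : 0 < n) (m : ℕ) :
    ramanujanSum n m =
      ∑ d ∈ n.divisors, ((moebius (n / d) : ℤ) : ℂ) * (if d ∣ m then (d : ℂ) else 0) := by
  have key := (sum_eq_iff_sum_smul_moebius_eq
    (f := fun d => ramanujanSum d m)
    (g := fun k => if k ∣ m then (k : ℂ) else 0)).1
    (fun k hk => sum_divisors_ramanujanSum m k hk) n hn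
  rw [← key, Nat.sum_divisorsAntidiagonal'
    (f := fun a b => (moebius a : ℤ) • (if b ∣ m then (b : ℂ) else 0))]
  simp [zsmul_eq_mul]

lemma single_divisor_hasSum (d : ℕ) (hd : 0 < d) (s : ℂ) (hs : 1 < s.re) :
    HasSum (fun m : ℕ => if m = 0 then (0 : ℂ) else (if d ∣ m then (d : ℂ) else 0) / (m : ℂ) ^ s)
      ((d : ℂ) ^ ((1 : ℂ) - s) * riemannZeta s) := by
  have hs0 : s ≠ 0 := fun h => by simp [h] at hs; linarith
  have hd0 : (d : ℂ) ≠ 0 := Nat.cast_ne_zero.2 hd.ne'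
  set F : ℕ → ℂ := fun m => if m = 0 then (0 : ℂ) else (if d ∣ m then (d : ℂ) else 0) / (m : ℂ) ^ s
  have hG : HasSum (fun k : ℕ => (d : ℂ) ^ ((1 : ℂ) - s) * (1 / (k : ℂ) ^ s))
      ((d : ℂ) ^ ((1 : ℂ) - s) * riemannZeta s) := by
    have h1 : Summable (fun k : ℕ => 1 / (k : ℂ) ^ s) :=
      Complex.summable_one_div_nat_cpow.2 hs
    rw [zeta_eq_tsum_one_div_nat_cpow hs]
    exact h1.hasSum.mul_left _
  have hinj : Function.Injective (fun k : ℕ => d * k) := fun a b h => by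
    simpa [hd.ne'] using h
  have hcomp : (F ∘ fun k : ℕ => d * k) =
      fun k : ℕ => (d : ℂ) ^ ((1 : ℂ) - s) * (1 / (k : ℂ) ^ s) := by
    funext k
    rcases Nat.eq_zero_or_pos k with rfl | hk
    · simp [F, zero_cpow hs0]
    · have hdk : d * k ≠ 0 := by positivity
      simp only [F, Function.comp_apply]
      rw [if_neg hdk, if_pos (dvd_mul_right d k)]
      rw [Nat.cast_mul, natCast_mul_natCast_cpow, cpow_sub _ _ hd0, cpow_one]
      have h1 : (d : ℂ) ^ s ≠ 0 := by
        rw [Ne, cpow_eq_zero_iff]; tauto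
      have h2 : (k : ℂ) ^ s ≠ 0 := by
        rw [Ne, cpow_eq_zero_iff]
        simp [Nat.cast_ne_zero, hk.ne', hs0]
      field_simp
  have hzero : ∀ m : ℕ, m ∉ Set.range (fun k : ℕ => d * k) → F m = 0 := by
    intro m hm
    rcases Nat.eq_zero_or_pos m with rfl | hmpos
    · simp [F]
    · have : ¬ d ∣ m := fun ⟨k, hk⟩ => hm ⟨k, hk.symm⟩
      simp [F, hmpos.ne', this]
  exact (hinj.hasSum_iff hzero).1 (hcomp ▸ hG)

/-- For `n ≥ 1` and `Re s > 1`, the Dirichlet series of Ramanujan sums in `m`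
converges and `∑_{m ≥ 1} C_n^m / m^s = ζ(s) · ∑_{d ∣ n} μ(n/d) · d^(1-s)`. -/
theorem tsum_ramanujanSum_in_m_div_cpow (n : ℕ) (hn : 1 ≤ n) (s : ℂ)
    (hs : 1 < s.re) :
    Summable (fun m : ℕ =>
      if m = 0 then (0 : ℂ) else ramanujanSum n m / (m : ℂ) ^ s) ∧
    ∑' m : ℕ, (if m = 0 then (0 : ℂ) else ramanujanSum n m / (m : ℂ) ^ s) =
      riemannZeta s *
        ∑ d ∈ n.divisors,
          ((ArithmeticFunction.moebius (n / d) : ℤ) : ℂ) * (d : ℂ) ^ ((1 : ℂ) - s) := by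
  have hfun : (fun m : ℕ => if m = 0 then (0 : ℂ) else ramanujanSum n m / (m : ℂ) ^ s) =
      fun m : ℕ => ∑ d ∈ n.divisors, ((moebius (n / d) : ℤ) : ℂ) *
        (if m = 0 then (0 : ℂ) else (if d ∣ m then (d : ℂ) else 0) / (m : ℂ) ^ s) := by
    funext m
    rcases Nat.eq_zero_or_pos m with rfl | hm
    · simp
    · rw [if_neg hm.ne', ramanujanSum_eq_sum n hn m, Finset.sum_div]
      refine Finset.sum_congr rfl fun d hd => ?_
      rw [if_neg hm.ne', mul_div_assoc]
  have hHS : HasSum (fun m : ℕ => ∑ d ∈ n.divisors, ((moebius (n / d) : ℤ) : ℂ) *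
        (if m = 0 then (0 : ℂ) else (if d ∣ m then (d : ℂ) else 0) / (m : ℂ) ^ s))
      (∑ d ∈ n.divisors, ((moebius (n / d) : ℤ) : ℂ) *
        ((d : ℂ) ^ ((1 : ℂ) - s) * riemannZeta s)) := by
    exact hasSum_sum fun d hd =>
      (single_divisor_hasSum d (Nat.pos_of_mem_divisors hd) s hs).mul_left _
  rw [hfun]
  refine ⟨hHS.summable, ?_⟩
  rw [hHS.tsum_eq, Finset.mul_sum]
  exact Finset.sum_congr rfl fun d hd => by ring
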